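/- Let X be a Hausdorff topological space and M a divisible ordered abelian group (a linearly ordered additive abelian group that is a ℚ-vector space) equipped with its order topology. Let U ⊆ X be open and A, B ⊆ X closed with A ∪ B = X \ U, and suppose there is a continuous function d : X → M whose zero set {x : d(x) = 0} equals A ∪ B. Let F, G, h : X → M be continuous functions such that F ≤ G pointwise, F(u) < G(u) for all u ∈ U, h(x) = F(x) for all x ∈ A, and h(x) = G(x) for all x ∈ B. Define H : X → M by H = F + (1/2)•((|h − F| + |d|) ⊓ (G − F)) + (1/2)•((|h − F| + |d|) ⊓ (((G − F) − |d|) ⊔ 0)), with pointwise operations, where ⊓ and ⊔ denote pointwise minimum and maximum and |·| the pointwise absolute value. Then H(x) = h(x) for all x ∈ A ∪ B, and F(u) < H(u) < G(u) for all u ∈ U. -/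

import Mathlib

section aux
variable {M : Type*} [AddCommGroup M] [LinearOrder M] [IsOrderedAddMonoid M] [Module ℚ M]

lemma half_add_half' (a : M) : (1/2 : ℚ) • a + (1/2 : ℚ) • a = a := by
  rw [← add_smul]; norm_num

lemma half_pos' {a : M} (ha : 0 < a) : 0 < (1/2 : ℚ) • a := by
  by_contra hb
  push_neg at hb
  have : a ≤ 0 := by
    calc a = (1/2 : ℚ) • a + (1/2 : ℚ) • a := (half_add_half' a).symm
    _ ≤ 0 + 0 := add_le_add hb hb
    _ = 0 := add_zero 0
  exact absurd ha (not_lt.mpr this)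

lemma half_nonneg' {a : M} (ha : 0 ≤ a) : 0 ≤ (1/2 : ℚ) • a := by
  rcases ha.lt_or_eq with h | h
  · exact (half_pos' h).le
  · rw [← h, smul_zero]

lemma half_lt_half' {a b : M} (hab : a < b) : (1/2 : ℚ) • a < (1/2 : ℚ) • b := by
  have : 0 < (1/2 : ℚ) • (b - a) := half_pos' (sub_pos.mpr hab)
  rw [smul_sub] at this
  exact sub_pos.mp this

lemma half_le_half' {a b : M} (hab : a ≤ b) : (1/2 : ℚ) • a ≤ (1/2 : ℚ) • b := by
  rcases hab.lt_or_eq with h | h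
  · exact (half_lt_half' h).le
  · rw [h]
end aux

/-- Construction 2.3 of the paper: mixing continuous functions. -/
theorem stmt_6 {X M : Type*} [TopologicalSpace X] [T2Space X]
    [AddCommGroup M] [LinearOrder M] [IsOrderedAddMonoid M] [Module ℚ M]
    [TopologicalSpace M] [OrderTopology M]
    (U : Set X) (hU : IsOpen U)
    (A B : Set X) (hA : IsClosed A) (hB : IsClosed B) (hAB : A ∪ B = Uᶜ)
    (d : X → M) (hd : Continuous d) (hdzero : {x | d x = 0} = A ∪ B)
    (F G h : X → M) (hF : Continuous F) (hG : Continuous G) (hh : Continuous h)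
    (hFG : ∀ x, F x ≤ G x) (hFGU : ∀ u ∈ U, F u < G u)
    (hhA : ∀ x ∈ A, h x = F x) (hhB : ∀ x ∈ B, h x = G x)
    (H : X → M)
    (hH : ∀ x, H x =
      F x + (1/2 : ℚ) • ((|h x - F x| + |d x|) ⊓ (G x - F x))
          + (1/2 : ℚ) • ((|h x - F x| + |d x|) ⊓ (((G x - F x) - |d x|) ⊔ 0))) :
    (∀ x ∈ A ∪ B, H x = h x) ∧ (∀ u ∈ U, F u < H u ∧ H u < G u) := by
  constructor
  · intro x hx
    have hdx : d x = 0 := by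
      have : x ∈ {x | d x = 0} := by rw [hdzero]; exact hx
      exact this
    have hdabs : |d x| = 0 := by rw [hdx, abs_zero]
    have hc : (0 : M) ≤ G x - F x := sub_nonneg.mpr (hFG x)
    rcases hx with hxA | hxB
    · have hhF : h x = F x := hhA x hxA
      have h1 : |h x - F x| = 0 := by rw [hhF, sub_self, abs_zero]
      rw [hH x, h1, hdabs, add_zero]
      have e2 : (0 : M) ⊓ (G x - F x) = 0 := inf_eq_left.mpr hc
      have e3 : (0 : M) ⊓ (((G x - F x) - 0) ⊔ 0) = 0 := inf_eq_left.mpr le_sup_right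
      rw [e2, e3, smul_zero, hhF, add_zero, add_zero]
    · have hhG : h x = G x := hhB x hxB
      have h1 : |h x - F x| = G x - F x := by rw [hhG, abs_of_nonneg hc]
      rw [hH x, h1, hdabs, add_zero, inf_idem, sub_zero, sup_eq_left.mpr hc, inf_idem,
        hhG, add_assoc, half_add_half', add_sub_cancel]
  · intro u hu
    have hdne : d u ≠ 0 := by
      intro h0
      have : u ∈ A ∪ B := by rw [← hdzero]; exact h0
      rw [hAB] at this
      exact this hu
    have he : (0 : M) < |d u| := abs_pos.mpr hdne
    have hc : (0 : M) < G u - F u := sub_pos.mpr (hFGU u hu)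
    have htpos : 0 < |h u - F u| + |d u| := add_pos_of_nonneg_of_pos (abs_nonneg _) he
    have ha1 : 0 < (|h u - F u| + |d u|) ⊓ (G u - F u) := lt_inf_iff.mpr ⟨htpos, hc⟩
    have ha2 : 0 ≤ (|h u - F u| + |d u|) ⊓ (((G u - F u) - |d u|) ⊔ 0) :=
      le_inf htpos.le le_sup_right
    have hb1 : (|h u - F u| + |d u|) ⊓ (G u - F u) ≤ G u - F u := inf_le_right
    have hb2 : (|h u - F u| + |d u|) ⊓ (((G u - F u) - |d u|) ⊔ 0) < G u - F u :=
      lt_of_le_of_lt inf_le_right (sup_lt_iff.mpr ⟨sub_lt_self _ he, hc⟩)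
    rw [hH u]
    constructor
    · calc F u < F u + (1/2 : ℚ) • ((|h u - F u| + |d u|) ⊓ (G u - F u)) :=
            lt_add_of_pos_right _ (half_pos' ha1)
        _ ≤ _ := le_add_of_nonneg_right (half_nonneg' ha2)
    · calc F u + (1/2 : ℚ) • ((|h u - F u| + |d u|) ⊓ (G u - F u))
            + (1/2 : ℚ) • ((|h u - F u| + |d u|) ⊓ (((G u - F u) - |d u|) ⊔ 0))
          < F u + (1/2 : ℚ) • (G u - F u) + (1/2 : ℚ) • (G u - F u) :=
            add_lt_add_of_le_of_lt
              (add_le_add_right (half_le_half' hb1) _) (half_lt_half' hb2)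
        _ = G u := by rw [add_assoc, half_add_half', add_sub_cancel]
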